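/- If f : ℝⁿ → ℝ is proper, lower semicontinuous, convex and pseudo-Lipschitz of order k (i.e. |f(x) - f(y)| ≤ L(1 + ‖x‖^{k-1} + ‖y‖^{k-1})‖x - y‖ for all x, y), then for any τ > 0 its Moreau envelope M_{τf}(x) = min_z { f(z) + (1/(2τ))‖x - z‖² } is also pseudo-Lipschitz of order k (with possibly a different constant). -/

import Mathlib

/-- The Moreau envelope of a proper, lsc, convex, pseudo-Lipschitz function of order `k`
is pseudo-Lipschitz of order `k` (possibly with a different constant). -/
theorem moreau_envelope_pseudoLipschitz {n : ℕ} (k : ℕ) (hk : 1 ≤ k)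
    (f : EuclideanSpace ℝ (Fin n) → ℝ)
    (hf_conv : ConvexOn ℝ Set.univ f) (hf_lsc : LowerSemicontinuous f)
    (L : ℝ) (hL : 0 < L)
    (hpl : ∀ x y, |f x - f y| ≤ L * (1 + ‖x‖ ^ (k - 1) + ‖y‖ ^ (k - 1)) * ‖x - y‖)
    (τ : ℝ) (hτ : 0 < τ)
    (p : EuclideanSpace ℝ (Fin n) → EuclideanSpace ℝ (Fin n))
    (M : EuclideanSpace ℝ (Fin n) → ℝ)
    (hp : ∀ x, IsMinOn (fun z => f z + (1 / (2 * τ)) * ‖x - z‖ ^ 2) Set.univ (p x))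
    (hM : ∀ x, M x = f (p x) + (1 / (2 * τ)) * ‖x - p x‖ ^ 2) :
    ∃ L' > 0, ∀ x y, |M x - M y| ≤ L' * (1 + ‖x‖ ^ (k - 1) + ‖y‖ ^ (k - 1)) * ‖x - y‖ := by
  set m := k - 1 with hm
  -- Step 1: global linear lower bound from convexity + local pseudo-Lipschitz bound
  have key : ∀ y z : EuclideanSpace ℝ (Fin n),
      f y - (L * (1 + 2 * (1 + ‖y‖) ^ m)) * ‖z - y‖ ≤ f z := by
    intro y z
    set K : ℝ := L * (1 + 2 * (1 + ‖y‖) ^ m) with hKdef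
    have hKpos : 0 < K := by positivity
    have loc : ∀ w : EuclideanSpace ℝ (Fin n), ‖w - y‖ ≤ 1 → |f w - f y| ≤ K * ‖w - y‖ := by
      intro w hw
      have hwn : ‖w‖ ≤ 1 + ‖y‖ := by
        have := norm_sub_norm_le w y
        linarith
      have h1 : ‖w‖ ^ m ≤ (1 + ‖y‖) ^ m := by
        exact pow_le_pow_left₀ (norm_nonneg w) hwn m
      have h2 : ‖y‖ ^ m ≤ (1 + ‖y‖) ^ m := by
        exact pow_le_pow_left₀ (norm_nonneg y) (by linarith [norm_nonneg y]) m
      calc |f w - f y| ≤ L * (1 + ‖w‖ ^ m + ‖y‖ ^ m) * ‖w - y‖ := hpl w y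
        _ ≤ K * ‖w - y‖ := by
            apply mul_le_mul_of_nonneg_right _ (norm_nonneg _)
            apply mul_le_mul_of_nonneg_left _ hL.le
            linarith
    by_cases h1 : ‖z - y‖ ≤ 1
    · have := loc z h1
      have := abs_le.mp this
      linarith [this.1]
    · push_neg at h1
      set t := ‖z - y‖ with htdef
      have ht0 : 0 < t := by linarith
      set w : EuclideanSpace ℝ (Fin n) := y + t⁻¹ • (z - y) with hwdef
      have hwy : ‖w - y‖ = 1 := by
        rw [hwdef]
        simp only [add_sub_cancel_left, norm_smul, norm_inv, Real.norm_eq_abs,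
          abs_of_pos ht0]
        field_simp
        exact htdef.symm
      have hcomb : w = (1 - t⁻¹) • y + t⁻¹ • z := by
        rw [hwdef]; module
      have hconv : f w ≤ (1 - t⁻¹) * f y + t⁻¹ * f z := by
        rw [hcomb]
        exact hf_conv.2 (Set.mem_univ y) (Set.mem_univ z)
          (by rw [sub_nonneg, inv_le_one_iff₀]; right; linarith)
          (by positivity) (by ring)
      have hmul : t * f w ≤ (t - 1) * f y + f z := by
        have h := mul_le_mul_of_nonneg_left hconv ht0.le
        have hexp : t * ((1 - t⁻¹) * f y + t⁻¹ * f z) = (t - 1) * f y + f z := by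
          field_simp
        linarith [hexp ▸ h]
      have hfw : f y - K ≤ f w := by
        have := (abs_le.mp (loc w (le_of_eq hwy))).1
        rw [hwy, mul_one] at this
        linarith
      nlinarith [mul_le_mul_of_nonneg_left hfw ht0.le]
  -- Step 2: bound on the prox displacement
  have dbound : ∀ y : EuclideanSpace ℝ (Fin n),
      ‖y - p y‖ ≤ 2 * τ * (L * (1 + 2 * (1 + ‖y‖) ^ m)) := by
    intro y
    set K : ℝ := L * (1 + 2 * (1 + ‖y‖) ^ m) with hKdef
    have hKpos : 0 < K := by positivity
    set d := ‖y - p y‖ with hddef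
    have hd0 : 0 ≤ d := norm_nonneg _
    have hmin : f (p y) + (1 / (2 * τ)) * d ^ 2 ≤ f y := by
      have := hp y (Set.mem_univ y)
      simpa using this
    have hlow : f y - K * d ≤ f (p y) := by
      have := key y (p y)
      rwa [norm_sub_rev] at this
    have hsq : d ^ 2 ≤ 2 * τ * (K * d) := by
      have h2τ : (0:ℝ) < 2 * τ := by linarith
      have : (1 / (2 * τ)) * d ^ 2 ≤ K * d := by linarith
      calc d ^ 2 = (2 * τ) * ((1 / (2 * τ)) * d ^ 2) := by field_simp
        _ ≤ (2 * τ) * (K * d) := by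
            apply mul_le_mul_of_nonneg_left this h2τ.le
        _ = 2 * τ * (K * d) := by ring
    rcases eq_or_lt_of_le hd0 with h | h
    · rw [← h]; positivity
    · have : d * d ≤ (2 * τ * K) * d := by nlinarith
      exact le_of_mul_le_mul_right (by linarith) h
  -- Step 3: one-sided quadratic estimate
  have main : ∀ x y : EuclideanSpace ℝ (Fin n),
      M x - M y ≤ (1 / (2 * τ)) * ((‖x - y‖ + 2 * ‖y - p y‖) * ‖x - y‖) := by
    intro x y
    have hmin : f (p x) + (1 / (2 * τ)) * ‖x - p x‖ ^ 2
        ≤ f (p y) + (1 / (2 * τ)) * ‖x - p y‖ ^ 2 := hp x (Set.mem_univ (p y))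
    have htri : ‖x - p y‖ ≤ ‖x - y‖ + ‖y - p y‖ := by
      calc ‖x - p y‖ = ‖(x - y) + (y - p y)‖ := by abel_nf
        _ ≤ ‖x - y‖ + ‖y - p y‖ := norm_add_le _ _
    have h2τ : (0:ℝ) < 1 / (2 * τ) := by positivity
    have hsq : ‖x - p y‖ ^ 2 ≤ (‖x - y‖ + ‖y - p y‖) ^ 2 := by
      apply pow_le_pow_left₀ (norm_nonneg _) htri
    rw [hM x, hM y]
    nlinarith [norm_nonneg (x - y), norm_nonneg (y - p y)]
  by_cases hk1 : k = 1
  · -- k = 1 : use the shift trick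
    refine ⟨L, hL, ?_⟩
    have shift : ∀ x y : EuclideanSpace ℝ (Fin n), M x - M y ≤ 3 * L * ‖x - y‖ := by
      intro x y
      have hmin : f (p x) + (1 / (2 * τ)) * ‖x - p x‖ ^ 2
          ≤ f (p y + (x - y)) + (1 / (2 * τ)) * ‖x - (p y + (x - y))‖ ^ 2 :=
        hp x (Set.mem_univ (p y + (x - y)))
      have heq : x - (p y + (x - y)) = y - p y := by abel
      rw [heq] at hmin
      have hf : f (p y + (x - y)) - f (p y) ≤ 3 * L * ‖x - y‖ := by
        have := (abs_le.mp (hpl (p y + (x - y)) (p y))).2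
        have heq2 : (p y + (x - y)) - p y = x - y := by abel
        rw [heq2] at this
        simp only [hm, hk1] at this
        norm_num at this
        linarith
      rw [hM x, hM y]
      linarith
    intro x y
    have hm0 : m = 0 := by simp [hm, hk1]
    rw [hm0]
    simp only [pow_zero]
    rw [abs_sub_le_iff]
    constructor
    · calc M x - M y ≤ 3 * L * ‖x - y‖ := shift x y
        _ = L * (1 + 1 + 1) * ‖x - y‖ := by ring
    · calc M y - M x ≤ 3 * L * ‖y - x‖ := shift y x
        _ = L * (1 + 1 + 1) * ‖x - y‖ := by rw [norm_sub_rev]; ring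
  · -- k ≥ 2, so m ≥ 1
    have hm1 : 1 ≤ m := by omega
    set C : ℝ := L * (1 + 2 ^ k) with hCdef
    have hCpos : 0 < C := by positivity
    refine ⟨1 / τ + 2 * C, by positivity, ?_⟩
    -- (1+t)^m ≤ 2^m (1 + t^m)
    have pow_bound : ∀ t : ℝ, 0 ≤ t → (1 + t) ^ m ≤ 2 ^ m * (1 + t ^ m) := by
      intro t ht
      rcases le_total t 1 with h | h
      · calc (1 + t) ^ m ≤ 2 ^ m := by
              apply pow_le_pow_left₀ (by linarith) (by linarith) m
          _ ≤ 2 ^ m * (1 + t ^ m) := by nlinarith [pow_pos (show (0:ℝ) < 2 by norm_num) m, pow_nonneg ht m]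
      · calc (1 + t) ^ m ≤ (2 * t) ^ m := by
              apply pow_le_pow_left₀ (by linarith) (by linarith) m
          _ = 2 ^ m * t ^ m := by rw [mul_pow]
          _ ≤ 2 ^ m * (1 + t ^ m) := by nlinarith [pow_pos (show (0:ℝ) < 2 by norm_num) m]
    have Kbound : ∀ y : EuclideanSpace ℝ (Fin n),
        L * (1 + 2 * (1 + ‖y‖) ^ m) ≤ C * (1 + ‖y‖ ^ m) := by
      intro y
      have h1 := pow_bound ‖y‖ (norm_nonneg y)
      have h2k : (2:ℝ) ^ k = 2 * 2 ^ m := by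
        rw [hm]
        rw [← pow_succ']
        congr 1
        omega
      have hyp : 0 ≤ ‖y‖ ^ m := pow_nonneg (norm_nonneg y) m
      have h2m : (0:ℝ) < 2 ^ m := pow_pos (by norm_num) m
      rw [hCdef, h2k]
      nlinarith
    -- t ≤ 1 + t^m for t ≥ 0, m ≥ 1
    have lin_bound : ∀ t : ℝ, 0 ≤ t → t ≤ 1 + t ^ m := by
      intro t ht
      rcases le_total t 1 with h | h
      · have : 0 ≤ t ^ m := pow_nonneg ht m
        linarith
      · have : t ≤ t ^ m := le_self_pow₀ h (by omega)
        linarith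
    intro x y
    have one_sided : ∀ a b : EuclideanSpace ℝ (Fin n),
        M a - M b ≤ (1 / τ + 2 * C) * (1 + (‖a‖ ^ m + ‖b‖ ^ m)) * ‖a - b‖ := by
      intro a b
      have hd := dbound b
      have hK := Kbound b
      have hSa : 0 ≤ ‖a‖ ^ m := pow_nonneg (norm_nonneg a) m
      have hSb : 0 ≤ ‖b‖ ^ m := pow_nonneg (norm_nonneg b) m
      have hdb : ‖b - p b‖ ≤ 2 * τ * (C * (1 + (‖a‖ ^ m + ‖b‖ ^ m))) := by
        have h2 : L * (1 + 2 * (1 + ‖b‖) ^ m) ≤ C * (1 + (‖a‖ ^ m + ‖b‖ ^ m)) := by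
          nlinarith
        calc ‖b - p b‖ ≤ 2 * τ * (L * (1 + 2 * (1 + ‖b‖) ^ m)) := hd
          _ ≤ 2 * τ * (C * (1 + (‖a‖ ^ m + ‖b‖ ^ m))) := by
              apply mul_le_mul_of_nonneg_left h2 (by positivity)
      have hab_norm : ‖a - b‖ ≤ 2 * (1 + (‖a‖ ^ m + ‖b‖ ^ m)) := by
        calc ‖a - b‖ ≤ ‖a‖ + ‖b‖ := norm_sub_le a b
          _ ≤ (1 + ‖a‖ ^ m) + (1 + ‖b‖ ^ m) :=
              add_le_add (lin_bound ‖a‖ (norm_nonneg a)) (lin_bound ‖b‖ (norm_nonneg b))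
          _ ≤ 2 * (1 + (‖a‖ ^ m + ‖b‖ ^ m)) := by linarith
      have hmain := main a b
      have hfactor : (1 / (2 * τ)) * (‖a - b‖ + 2 * ‖b - p b‖)
          ≤ (1 / τ + 2 * C) * (1 + (‖a‖ ^ m + ‖b‖ ^ m)) := by
        have hstep : ‖a - b‖ + 2 * ‖b - p b‖
            ≤ 2 * (1 + (‖a‖ ^ m + ‖b‖ ^ m)) + 4 * τ * (C * (1 + (‖a‖ ^ m + ‖b‖ ^ m))) := by
          linarith
        calc (1 / (2 * τ)) * (‖a - b‖ + 2 * ‖b - p b‖)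
            ≤ (1 / (2 * τ)) * (2 * (1 + (‖a‖ ^ m + ‖b‖ ^ m))
                + 4 * τ * (C * (1 + (‖a‖ ^ m + ‖b‖ ^ m)))) := by
              apply mul_le_mul_of_nonneg_left hstep (by positivity)
          _ = (1 / τ + 2 * C) * (1 + (‖a‖ ^ m + ‖b‖ ^ m)) := by field_simp; ring
      calc M a - M b ≤ (1 / (2 * τ)) * ((‖a - b‖ + 2 * ‖b - p b‖) * ‖a - b‖) := hmain
        _ = ((1 / (2 * τ)) * (‖a - b‖ + 2 * ‖b - p b‖)) * ‖a - b‖ := by ring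
        _ ≤ (1 / τ + 2 * C) * (1 + (‖a‖ ^ m + ‖b‖ ^ m)) * ‖a - b‖ := by
            apply mul_le_mul_of_nonneg_right hfactor (norm_nonneg _)
    rw [abs_sub_le_iff]
    constructor
    · calc M x - M y ≤ (1 / τ + 2 * C) * (1 + (‖x‖ ^ m + ‖y‖ ^ m)) * ‖x - y‖ :=
            one_sided x y
        _ = (1 / τ + 2 * C) * (1 + ‖x‖ ^ m + ‖y‖ ^ m) * ‖x - y‖ := by ring
    · calc M y - M x ≤ (1 / τ + 2 * C) * (1 + (‖y‖ ^ m + ‖x‖ ^ m)) * ‖y - x‖ :=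
            one_sided y x
        _ = (1 / τ + 2 * C) * (1 + ‖x‖ ^ m + ‖y‖ ^ m) * ‖x - y‖ := by
            rw [norm_sub_rev]; ring
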